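/- Overlap of fermionic orientation states (non-ideality of the fermionic field QRF): for all real η, λ, the inner product ⟨v η, v λ⟩ := ∑ i, conj (v η i) * (v λ i) equals (1 + Complex.exp (-(Complex.I * (λ - η)))) / 2, and consequently its squared modulus satisfies ‖⟨v η, v λ⟩‖² = 1/2 + Real.cos (η - λ) / 2. In particular the orientation states are not pairwise orthogonal, so the fermionic field QRF is complete but not ideal. -/

import Mathlib

/-- Single-site fermionic orientation state `v λ = (|0⟩ + e^{-iλ}|1⟩)/√2`. -/
noncomputable def orientationState (lam : ℝ) : Fin 2 → ℂ :=
  ((Real.sqrt 2 : ℝ) : ℂ)⁻¹ • ![1, Complex.exp (-(Complex.I * lam))]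

/-- **Overlap of fermionic orientation states.**  For all real `η, λ`,
`⟨v η, v λ⟩ = (1 + e^{-i(λ-η)})/2`, and `‖⟨v η, v λ⟩‖² = 1/2 + cos(η-λ)/2`; in
particular the orientation states are not pairwise orthogonal (non-ideal QRF). -/
theorem orientation_state_overlap (η lam : ℝ) :
    (∑ i : Fin 2, star (orientationState η i) * orientationState lam i)
        = (1 + Complex.exp (-(Complex.I * ((lam : ℂ) - (η : ℂ))))) / 2
    ∧ ‖∑ i : Fin 2, star (orientationState η i) * orientationState lam i‖ ^ 2
        = 1 / 2 + Real.cos (η - lam) / 2 := by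
  have h2 : ((Real.sqrt 2 : ℝ) : ℂ) * ((Real.sqrt 2 : ℝ) : ℂ) = 2 := by
    rw [← Complex.ofReal_mul, Real.mul_self_sqrt (by norm_num)]
    norm_num
  have hne : ((Real.sqrt 2 : ℝ) : ℂ) ≠ 0 := by
    simpa using Real.sqrt_ne_zero'.mpr (by norm_num : (0:ℝ) < 2)
  have h : (∑ i : Fin 2, star (orientationState η i) * orientationState lam i)
      = (1 + Complex.exp (-(Complex.I * ((lam : ℂ) - (η : ℂ))))) / 2 := by
    simp only [orientationState, Fin.sum_univ_two, Pi.smul_apply, Matrix.cons_val_zero,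
      Matrix.cons_val_one, Matrix.head_cons, smul_eq_mul, star_mul', mul_one,
      Complex.star_def]
    rw [← Complex.exp_conj]
    have : ∀ x : ℝ, (starRingEnd ℂ) (-(Complex.I * x)) = Complex.I * x := by
      intro x; simp [map_neg, map_mul, Complex.conj_I]
    rw [this]
    have hc : (starRingEnd ℂ) (((Real.sqrt 2 : ℝ) : ℂ))⁻¹ = (((Real.sqrt 2 : ℝ) : ℂ))⁻¹ := by
      simp [map_inv₀, Complex.conj_ofReal]
    rw [hc]
    have hexp : Complex.exp (Complex.I * η) * Complex.exp (-(Complex.I * lam))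
        = Complex.exp (-(Complex.I * ((lam : ℂ) - (η : ℂ)))) := by
      rw [← Complex.exp_add]; ring_nf
    field_simp
    rw [sq, h2, map_one, mul_comm _ (2:ℂ)]
    rw [hexp]
  refine ⟨h, ?_⟩
  rw [h]
  have : -(Complex.I * ((lam : ℂ) - (η : ℂ))) = ((η - lam : ℝ) : ℂ) * Complex.I := by
    push_cast; ring
  rw [this, Complex.exp_mul_I]
  rw [Complex.sq_norm, Complex.normSq_div]
  simp only [Complex.normSq_apply, Complex.add_re, Complex.add_im, Complex.one_re,
    Complex.one_im, Complex.mul_re, Complex.mul_im, Complex.I_re, Complex.I_im,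
    Complex.cos_ofReal_re, Complex.cos_ofReal_im, Complex.sin_ofReal_re, Complex.sin_ofReal_im]
  norm_num
  ring_nf
  rw [Real.sin_sq]
  ring
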